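/- arXiv:2001.00836 — 2 statements merged into one kernel-verified Lean document; each statement's English description precedes it below -/
import Mathlib

section
/- If a measurement operator Λ with 0 ≼ Λ ≼ I satisfies Tr(Λρ) ≥ 1 − ε for a density operator ρ and 0 ≤ ε ≤ 1, then the post-measurement state ρ' = √Λ ρ √Λ / Tr(Λρ) satisfies ‖ρ − ρ'‖₁ ≤ 2√ε. -/
open scoped ComplexOrder
/-- The old Mathlib `Matrix.PosSemidef.sqrt` (removed since), restated with its old definition. -/
noncomputable def Matrix.PosSemidef.sqrt {n 𝕜 : Type*} [Fintype n] [RCLike 𝕜] [DecidableEq n]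
    {A : Matrix n n 𝕜} (hA : A.PosSemidef) : Matrix n n 𝕜 :=
  hA.1.eigenvectorUnitary.1 * Matrix.diagonal ((↑) ∘ (√·) ∘ hA.1.eigenvalues) *
    (star hA.1.eigenvectorUnitary : Matrix n n 𝕜)
/-- Trace norm of a complex matrix: trace of the positive square root of `Aᴴ * A`. -/
noncomputable def traceNorm {n : ℕ} (A : Matrix (Fin n) (Fin n) ℂ) : ℝ :=
  ((Matrix.posSemidef_conjTranspose_mul_self A).sqrt.trace).re

open Matrix

open scoped MatrixOrder in
lemma Matrix.PosSemidef.sqrt_eq_cfcSqrt {n 𝕜 : Type*} [Fintype n] [RCLike 𝕜] [DecidableEq n]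
    {A : Matrix n n 𝕜} (hA : A.PosSemidef) : hA.sqrt = CFC.sqrt A := by
  rw [CFC.sqrt_eq_cfc, cfc_nnreal_eq_real _ A hA.nonneg, hA.1.cfc_eq, Matrix.PosSemidef.sqrt,
    IsHermitian.cfc, Unitary.conjStarAlgAut_apply]
  congr 3
  funext i
  simp [Real.coe_sqrt, Real.coe_toNNReal', hA.eigenvalues_nonneg i]

open scoped MatrixOrder in
lemma Matrix.PosSemidef.posSemidef_sqrt {n 𝕜 : Type*} [Fintype n] [RCLike 𝕜] [DecidableEq n]
    {A : Matrix n n 𝕜} (hA : A.PosSemidef) : hA.sqrt.PosSemidef := by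
  rw [hA.sqrt_eq_cfcSqrt]
  exact Matrix.nonneg_iff_posSemidef.mp (CFC.sqrt_nonneg A)

open scoped MatrixOrder in
lemma Matrix.PosSemidef.sqrt_mul_self {n 𝕜 : Type*} [Fintype n] [RCLike 𝕜] [DecidableEq n]
    {A : Matrix n n 𝕜} (hA : A.PosSemidef) : hA.sqrt * hA.sqrt = A := by
  rw [hA.sqrt_eq_cfcSqrt]
  exact CFC.sqrt_mul_sqrt_self A hA.nonneg

open scoped MatrixOrder in
lemma Matrix.PosSemidef.eq_sqrt_of_sq_eq {n 𝕜 : Type*} [Fintype n] [RCLike 𝕜] [DecidableEq n]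
    {A B : Matrix n n 𝕜} (hA : A.PosSemidef) (hB : B.PosSemidef) (hAB : A ^ 2 = B) :
    A = hB.sqrt := by
  rw [hB.sqrt_eq_cfcSqrt, eq_comm, CFC.sqrt_eq_iff B A hB.nonneg hA.nonneg, ← sq, hAB]

variable {n : ℕ}

lemma trace_hermSq_re (M : Matrix (Fin n) (Fin n) ℂ) :
    ((Mᴴ * M).trace).re = ∑ p : Fin n × Fin n, ‖M p.2 p.1‖ ^ 2 := by
  rw [Matrix.trace, ← Finset.univ_product_univ, Finset.sum_product]
  simp only [Matrix.diag_apply, Matrix.mul_apply, Complex.re_sum, Matrix.conjTranspose_apply]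
  congr 1 with j
  congr 1 with i
  simp [Complex.sq_norm, Complex.normSq_apply, Complex.mul_re, Complex.star_def]

lemma trace_cs (P Q : Matrix (Fin n) (Fin n) ℂ) :
    ((Pᴴ * Q).trace).re ≤ Real.sqrt ((Pᴴ * P).trace).re * Real.sqrt ((Qᴴ * Q).trace).re := by
  have h1 : ((Pᴴ * Q).trace).re ≤
      ∑ p : Fin n × Fin n, ‖P p.2 p.1‖ * ‖Q p.2 p.1‖ := by
    rw [Matrix.trace, ← Finset.univ_product_univ, Finset.sum_product]
    simp only [Matrix.diag_apply, Matrix.mul_apply, Complex.re_sum, Matrix.conjTranspose_apply]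
    refine Finset.sum_le_sum fun j _ => Finset.sum_le_sum fun i _ => ?_
    calc (star (P i j) * Q i j).re
        ≤ ‖star (P i j) * Q i j‖ := Complex.re_le_norm _
      _ = ‖P i j‖ * ‖Q i j‖ := by
          rw [norm_mul, norm_star]
  rw [trace_hermSq_re, trace_hermSq_re]
  refine h1.trans ?_
  have h2 := Finset.sum_mul_sq_le_sq_mul_sq Finset.univ
    (fun p : Fin n × Fin n => ‖P p.2 p.1‖)
    (fun p : Fin n × Fin n => ‖Q p.2 p.1‖)
  have h3 : 0 ≤ ∑ p : Fin n × Fin n, ‖P p.2 p.1‖ * ‖Q p.2 p.1‖ :=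
    Finset.sum_nonneg fun p _ => mul_nonneg (norm_nonneg _) (norm_nonneg _)
  calc ∑ p : Fin n × Fin n, ‖P p.2 p.1‖ * ‖Q p.2 p.1‖
      = Real.sqrt ((∑ p : Fin n × Fin n, ‖P p.2 p.1‖ * ‖Q p.2 p.1‖) ^ 2) :=
        (Real.sqrt_sq h3).symm
    _ ≤ Real.sqrt ((∑ p : Fin n × Fin n, ‖P p.2 p.1‖ ^ 2) *
          ∑ p : Fin n × Fin n, ‖Q p.2 p.1‖ ^ 2) := Real.sqrt_le_sqrt h2
    _ = _ := Real.sqrt_mul (Finset.sum_nonneg fun p _ => sq_nonneg _) _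

lemma trace_nonneg_of_psd {P : Matrix (Fin n) (Fin n) ℂ} (hP : P.PosSemidef) : 0 ≤ P.trace := by
  rw [Matrix.trace]
  apply Finset.sum_nonneg
  intro i _
  have := hP.dotProduct_mulVec_nonneg (Pi.single i 1)
  simpa [dotProduct, Pi.single_apply, Matrix.mulVec_single, Finset.sum_ite_eq] using this

lemma trace_mul_psd_nonneg {P Q : Matrix (Fin n) (Fin n) ℂ} (hP : P.PosSemidef)
    (hQ : Q.PosSemidef) : 0 ≤ (P * Q).trace := by
  have h1 : (P * Q).trace = (hP.sqrt * Q * hP.sqrt).trace := by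
    rw [Matrix.trace_mul_cycle hP.sqrt Q hP.sqrt, hP.sqrt_mul_self]
  rw [h1]
  have h2 : hP.sqrt * Q * hP.sqrt = (hP.sqrt)ᴴ * Q * hP.sqrt := by
    rw [hP.posSemidef_sqrt.1]
  rw [h2]
  exact trace_nonneg_of_psd (hQ.conjTranspose_mul_mul_same _)

lemma traceNorm_psd {P : Matrix (Fin n) (Fin n) ℂ} (hP : P.PosSemidef) :
    traceNorm P = P.trace.re := by
  have h : P = (Matrix.posSemidef_conjTranspose_mul_self P).sqrt :=
    hP.eq_sqrt_of_sq_eq _ (by rw [pow_two, hP.1])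
  rw [traceNorm, ← h]


variable {n : ℕ}

lemma conj_sandwich (U : Matrix (Fin n) (Fin n) ℂ) (hU : Uᴴ * U = 1)
    (a b : Fin n → ℂ) :
    (U * diagonal a * Uᴴ) * (U * diagonal b * Uᴴ) = U * diagonal (fun i => a i * b i) * Uᴴ := by
  simp only [Matrix.mul_assoc]
  rw [show Uᴴ * (U * (diagonal b * Uᴴ)) = diagonal b * Uᴴ by
    rw [← Matrix.mul_assoc, hU, Matrix.one_mul]]
  rw [← Matrix.mul_assoc (diagonal a), Matrix.diagonal_mul_diagonal]

lemma exists_dual_matrix {H : Matrix (Fin n) (Fin n) ℂ} (hH : H.IsHermitian) :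
    ∃ B : Matrix (Fin n) (Fin n) ℂ, Bᴴ = B ∧ Bᴴ * B = 1 ∧
      traceNorm H = ((B * H).trace).re := by
  classical
  set U : Matrix (Fin n) (Fin n) ℂ := (hH.eigenvectorUnitary : Matrix (Fin n) (Fin n) ℂ)
    with hUdef
  have hU1 : U * Uᴴ = 1 := by
    rw [← Matrix.star_eq_conjTranspose]
    exact Matrix.mem_unitaryGroup_iff.mp hH.eigenvectorUnitary.2
  have hU2 : Uᴴ * U = 1 := by
    rw [← Matrix.star_eq_conjTranspose]
    exact Matrix.mem_unitaryGroup_iff'.mp hH.eigenvectorUnitary.2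
  set d := hH.eigenvalues with hddef
  set s : Fin n → ℂ := fun i => if 0 ≤ d i then 1 else -1 with hsdef
  have hBherm : (U * diagonal s * Uᴴ)ᴴ = U * diagonal s * Uᴴ := by
    rw [Matrix.conjTranspose_mul, Matrix.conjTranspose_mul,
      Matrix.conjTranspose_conjTranspose, Matrix.diagonal_conjTranspose]
    rw [show star s = s by
      funext i
      by_cases h : 0 ≤ d i <;> simp [hsdef, h]]
    rw [Matrix.mul_assoc]
  refine ⟨U * diagonal s * Uᴴ, hBherm, ?_, ?_⟩
  · rw [hBherm, conj_sandwich U hU2]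
    rw [show (fun i => s i * s i) = fun _ => (1 : ℂ) by
      funext i
      by_cases h : 0 ≤ d i <;> simp [hsdef, h]]
    rw [Matrix.diagonal_one, Matrix.mul_one, hU1]
  · have hspec : H = U * diagonal (fun i => (d i : ℂ)) * Uᴴ := by
      have := hH.spectral_theorem
      rw [Unitary.conjStarAlgAut_apply] at this
      rw [← Matrix.star_eq_conjTranspose]
      exact this
    have hBH : (U * diagonal s * Uᴴ) * H = U * diagonal (fun i => ((|d i| : ℝ) : ℂ)) * Uᴴ := by
      conv_lhs => rw [hspec]
      rw [conj_sandwich U hU2]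
      rw [show (fun i => s i * (d i : ℂ)) = fun i => ((|d i| : ℝ) : ℂ) by
        funext i
        by_cases h : 0 ≤ d i
        · simp [hsdef, h, abs_of_nonneg h]
        · simp [hsdef, h, abs_of_neg (lt_of_not_ge h)]]
    have htr : ∀ a : Fin n → ℂ, (U * diagonal a * Uᴴ).trace = ∑ i, a i := by
      intro a
      rw [Matrix.trace_mul_cycle, hU2, Matrix.one_mul, Matrix.trace_diagonal]
    have hS : (U * diagonal (fun i => ((|d i| : ℝ) : ℂ)) * Uᴴ).PosSemidef := by
      apply Matrix.PosSemidef.mul_mul_conjTranspose_same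
      refine Matrix.posSemidef_diagonal_iff.mpr fun i => ?_
      rw [Complex.nonneg_iff]
      simp [abs_nonneg]
    have hS2 : (U * diagonal (fun i => ((|d i| : ℝ) : ℂ)) * Uᴴ) ^ 2 = Hᴴ * H := by
      rw [pow_two, conj_sandwich U hU2, show Hᴴ = H from hH]
      conv_rhs => rw [hspec]
      rw [conj_sandwich U hU2]
      rw [show (fun i => ((|d i| : ℝ) : ℂ) * ((|d i| : ℝ) : ℂ)) = fun i => (d i : ℂ) * (d i : ℂ) by
        funext i
        rw [← Complex.ofReal_mul, ← Complex.ofReal_mul, abs_mul_abs_self]]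
    have hsqrt := hS.eq_sqrt_of_sq_eq (Matrix.posSemidef_conjTranspose_mul_self H) hS2
    rw [traceNorm, ← hsqrt, hBH]

variable {n : ℕ}

lemma eigenvalues_le_one {Λ : Matrix (Fin n) (Fin n) ℂ} (hΛ : Λ.PosSemidef)
    (hle : ((1 : Matrix (Fin n) (Fin n) ℂ) - Λ).PosSemidef) (i : Fin n) :
    hΛ.1.eigenvalues i ≤ 1 := by
  classical
  set v : Fin n → ℂ := (WithLp.equiv 2 _) (hΛ.1.eigenvectorBasis i) with hvdef
  have hmv : Λ *ᵥ v = hΛ.1.eigenvalues i • v := hΛ.1.mulVec_eigenvectorBasis i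
  have hvv : star v ⬝ᵥ v = 1 := by
    have h1 : (inner ℂ (hΛ.1.eigenvectorBasis i) (hΛ.1.eigenvectorBasis i) : ℂ) = 1 := by
      rw [inner_self_eq_norm_sq_to_K, hΛ.1.eigenvectorBasis.orthonormal.1 i]
      norm_num
    rw [EuclideanSpace.inner_eq_star_dotProduct] at h1
    rw [dotProduct_comm]
    exact h1
  have h2 := hle.dotProduct_mulVec_nonneg v
  rw [Matrix.sub_mulVec, Matrix.one_mulVec, hmv, dotProduct_sub,
    dotProduct_smul, hvv] at h2
  have h3 : (0 : ℂ) ≤ 1 - (hΛ.1.eigenvalues i : ℂ) := by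
    convert h2 using 2
    simp [RCLike.real_smul_eq_coe_mul]
  rw [Complex.nonneg_iff] at h3
  have := h3.1
  simp at this
  linarith

lemma one_sub_sqrt_psd {Λ : Matrix (Fin n) (Fin n) ℂ} (hΛ : Λ.PosSemidef)
    (hle : ((1 : Matrix (Fin n) (Fin n) ℂ) - Λ).PosSemidef) :
    ((1 : Matrix (Fin n) (Fin n) ℂ) - hΛ.sqrt).PosSemidef := by
  classical
  have hU1 : (hΛ.1.eigenvectorUnitary : Matrix (Fin n) (Fin n) ℂ) *
      (hΛ.1.eigenvectorUnitary : Matrix (Fin n) (Fin n) ℂ)ᴴ = 1 := by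
    rw [← Matrix.star_eq_conjTranspose]
    exact Matrix.mem_unitaryGroup_iff.mp hΛ.1.eigenvectorUnitary.2
  have key : (1 : Matrix (Fin n) (Fin n) ℂ) - hΛ.sqrt =
      (hΛ.1.eigenvectorUnitary : Matrix (Fin n) (Fin n) ℂ) *
        diagonal (fun i => 1 - (RCLike.ofReal ∘ Real.sqrt ∘ hΛ.1.eigenvalues) i) *
        (hΛ.1.eigenvectorUnitary : Matrix (Fin n) (Fin n) ℂ)ᴴ := by
    rw [Matrix.PosSemidef.sqrt, Matrix.star_eq_conjTranspose]
    rw [show (diagonal (fun i => 1 - (RCLike.ofReal ∘ Real.sqrt ∘ hΛ.1.eigenvalues) i)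
          : Matrix (Fin n) (Fin n) ℂ)
        = 1 - diagonal (RCLike.ofReal ∘ Real.sqrt ∘ hΛ.1.eigenvalues) from by
      rw [← Matrix.diagonal_one, Matrix.diagonal_sub]]
    rw [Matrix.mul_sub, Matrix.sub_mul, Matrix.mul_one, hU1]
  rw [key]
  apply Matrix.PosSemidef.mul_mul_conjTranspose_same
  refine Matrix.posSemidef_diagonal_iff.mpr fun i => ?_
  show (0 : ℂ) ≤ 1 - ((Real.sqrt (hΛ.1.eigenvalues i) : ℝ) : ℂ)
  rw [show (1 : ℂ) - ((Real.sqrt (hΛ.1.eigenvalues i) : ℝ) : ℂ)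
      = ((1 - Real.sqrt (hΛ.1.eigenvalues i) : ℝ) : ℂ) by push_cast; ring]
  rw [Complex.nonneg_iff]
  constructor
  · simp only [Complex.ofReal_re]
    have h1 : Real.sqrt (hΛ.1.eigenvalues i) ≤ 1 :=
      Real.sqrt_le_one.mpr (eigenvalues_le_one hΛ hle i)
    linarith
  · simp

lemma sub_sq_psd {A : Matrix (Fin n) (Fin n) ℂ} (hA : A.PosSemidef)
    (hle : ((1 : Matrix (Fin n) (Fin n) ℂ) - A).PosSemidef) :
    (A - A * A).PosSemidef := by
  obtain ⟨B, hB⟩ : ∃ B, hA.sqrt = B := ⟨_, rfl⟩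
  have hBB : B * B = A := by rw [← hB]; exact hA.sqrt_mul_self
  have hBh : Bᴴ = B := by rw [← hB]; exact hA.posSemidef_sqrt.1
  have h : A - A * A = Bᴴ * ((1 : Matrix (Fin n) (Fin n) ℂ) - A) * B := by
    rw [hBh, Matrix.mul_sub, Matrix.sub_mul, Matrix.mul_one, ← hBB]
    noncomm_ring
  rw [h]
  exact hle.conjTranspose_mul_mul_same _

/-- Gentle measurement lemma. -/
theorem gentle_measurement {n : ℕ} (ρ Λ : Matrix (Fin n) (Fin n) ℂ)
    (hρ : ρ.PosSemidef) (hρtr : ρ.trace = 1)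
    (hΛ : Λ.PosSemidef) (hΛle : ((1 : Matrix (Fin n) (Fin n) ℂ) - Λ).PosSemidef)
    (ε : ℝ) (hε0 : 0 ≤ ε) (hε1 : ε ≤ 1)
    (h : 1 - ε ≤ ((Λ * ρ).trace).re) :
    traceNorm (ρ - ((Λ * ρ).trace)⁻¹ • (hΛ.sqrt * ρ * hΛ.sqrt)) ≤ 2 * Real.sqrt ε := by
  classical
  have hτ : 0 ≤ (Λ * ρ).trace := trace_mul_psd_nonneg hΛ hρ
  rw [Complex.nonneg_iff] at hτ
  set t : ℝ := ((Λ * ρ).trace).re with htdef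
  have hτt : (Λ * ρ).trace = (t : ℂ) := by
    apply Complex.ext <;> simp [htdef, ← hτ.2]
  have ht0 : 0 ≤ t := hτ.1
  by_cases hz : t = 0
  · have hτ0 : (Λ * ρ).trace = 0 := by rw [hτt, hz]; simp
    rw [hτ0]
    simp only [_root_.inv_zero, zero_smul, sub_zero]
    rw [traceNorm_psd hρ, hρtr]
    have hε : 1 ≤ ε := by rw [hz] at h; linarith
    have h1 : (1:ℝ) ≤ Real.sqrt ε := Real.one_le_sqrt.mpr hε
    simp only [Complex.one_re]
    linarith
  · have htpos : 0 < t := lt_of_le_of_ne ht0 (Ne.symm hz)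
    obtain ⟨A, hAdef⟩ : ∃ A, hΛ.sqrt = A := ⟨_, rfl⟩
    obtain ⟨X, hXdef⟩ : ∃ X, hρ.sqrt = X := ⟨_, rfl⟩
    have hAps : A.PosSemidef := hAdef ▸ hΛ.posSemidef_sqrt
    have hXps : X.PosSemidef := hXdef ▸ hρ.posSemidef_sqrt
    have hAh : Aᴴ = A := hAps.1
    have hXh : Xᴴ = X := hXps.1
    have hAA : A * A = Λ := hAdef ▸ hΛ.sqrt_mul_self
    have hXX : X * X = ρ := hXdef ▸ hρ.sqrt_mul_self
    set c : ℝ := Real.sqrt t with hcdef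
    have hc : c * c = t := Real.mul_self_sqrt ht0
    have hcpos : 0 < c := Real.sqrt_pos.mpr htpos
    set Y : Matrix (Fin n) (Fin n) ℂ := ((c : ℂ))⁻¹ • (A * X) with hYdef
    have hYh : Yᴴ = ((c : ℂ))⁻¹ • (X * A) := by
      rw [hYdef, Matrix.conjTranspose_smul, Matrix.conjTranspose_mul, hAh, hXh]
      congr 1
      simp
    have hsc : ((c : ℂ))⁻¹ * ((c : ℂ))⁻¹ = ((Λ * ρ).trace)⁻¹ := by
      rw [hτt, ← hc]
      push_cast
      rw [mul_inv]
    have hYY : Y * Yᴴ = ((Λ * ρ).trace)⁻¹ • (A * ρ * A) := by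
      rw [hYh, hYdef, Matrix.smul_mul, Matrix.mul_smul, smul_smul, hsc]
      congr 1
      rw [← hXX]
      noncomm_ring
    have hstate : ρ - ((Λ * ρ).trace)⁻¹ • (A * ρ * A) = X * X - Y * Yᴴ := by
      rw [hYY, hXX]
    have hherm : (X * X - Y * Yᴴ).IsHermitian := by
      show (X * X - Y * Yᴴ)ᴴ = _
      rw [Matrix.conjTranspose_sub, Matrix.conjTranspose_mul, Matrix.conjTranspose_mul,
        Matrix.conjTranspose_conjTranspose, hXh]
    obtain ⟨B, hBh, hBu, hBtr⟩ := exists_dual_matrix hherm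
    rw [hAdef, hstate, hBtr]
    -- trace computations
    have tXX : (Xᴴ * X).trace = 1 := by rw [hXh, hXX, hρtr]
    have tYY : (Yᴴ * Y).trace = 1 := by
      rw [hYh, hYdef, Matrix.smul_mul, Matrix.mul_smul, smul_smul, Matrix.trace_smul]
      have h1 : (X * A * (A * X)).trace = (Λ * ρ).trace := by
        rw [show X * A * (A * X) = X * (A * A) * X by noncomm_ring, hAA,
          Matrix.trace_mul_cycle, hXX, Matrix.trace_mul_comm]
      rw [h1, hτt, hsc, hτt]
      rw [smul_eq_mul]
      have : (t : ℂ) ≠ 0 := by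
        simpa using hz
      field_simp
    have tXY : (Xᴴ * Y).trace = ((c : ℂ))⁻¹ * (A * ρ).trace := by
      rw [hXh, hYdef, Matrix.mul_smul, Matrix.trace_smul, smul_eq_mul]
      congr 1
      rw [show X * (A * X) = X * A * X by rw [Matrix.mul_assoc],
        Matrix.trace_mul_cycle, hXX, Matrix.trace_mul_comm]
    have hAρre : (A * ρ).trace = (((A * ρ).trace).re : ℂ) := by
      have h0 : 0 ≤ (A * ρ).trace := trace_mul_psd_nonneg hAps hρ
      rw [Complex.nonneg_iff] at h0
      apply Complex.ext <;> simp [← h0.2]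
    have hu : t ≤ ((A * ρ).trace).re := by
      have hsub : ((1 : Matrix (Fin n) (Fin n) ℂ) - A).PosSemidef := by
        rw [← hAdef]
        exact one_sub_sqrt_psd hΛ hΛle
      have h0 := trace_mul_psd_nonneg (sub_sq_psd hAps hsub) hρ
      rw [Complex.nonneg_iff] at h0
      have := h0.1
      rw [Matrix.sub_mul, Matrix.trace_sub, Complex.sub_re, hAA] at this
      linarith
    set g : ℝ := ((Xᴴ * Y).trace).re with hgdef
    have hg : g = c⁻¹ * ((A * ρ).trace).re := by
      rw [hgdef, tXY, hAρre]
      rw [show ((c : ℂ))⁻¹ = ((c⁻¹ : ℝ) : ℂ) by push_cast; ring]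
      rw [← Complex.ofReal_mul]
      simp
    have hgc : c ≤ g := by
      rw [hg]
      have h1 : c⁻¹ * t ≤ c⁻¹ * ((A * ρ).trace).re :=
        mul_le_mul_of_nonneg_left hu (by positivity)
      calc c = c⁻¹ * t := by rw [← hc]; field_simp
        _ ≤ _ := h1
    have hg1 : g ≤ 1 := by
      have hcs := trace_cs X Y
      rw [tXX, tYY] at hcs
      simpa using hcs
    have hYX : ((Yᴴ * X).trace).re = g := by
      rw [hgdef]
      rw [show Yᴴ * X = (Xᴴ * Y)ᴴ by
        rw [Matrix.conjTranspose_mul, Matrix.conjTranspose_conjTranspose]]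
      rw [Matrix.trace_conjTranspose]
      simp
    have hminus : (((X - Y)ᴴ * (X - Y)).trace).re = 2 - 2 * g := by
      rw [Matrix.conjTranspose_sub, Matrix.sub_mul, Matrix.mul_sub, Matrix.mul_sub,
        Matrix.trace_sub, Matrix.trace_sub, Matrix.trace_sub,
        Complex.sub_re, Complex.sub_re, Complex.sub_re, tXX, tYY, hYX]
      rw [hgdef]
      simp only [Complex.one_re]
      ring
    have hplus : (((X + Y)ᴴ * (X + Y)).trace).re = 2 + 2 * g := by
      rw [Matrix.conjTranspose_add, Matrix.add_mul, Matrix.mul_add, Matrix.mul_add,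
        Matrix.trace_add, Matrix.trace_add, Matrix.trace_add,
        Complex.add_re, Complex.add_re, Complex.add_re, tXX, tYY, hYX]
      rw [hgdef]
      simp only [Complex.one_re]
      ring
    have hQ : ((B * (X + Y))ᴴ * (B * (X + Y))).trace = ((X + Y)ᴴ * (X + Y)).trace := by
      rw [Matrix.conjTranspose_mul]
      rw [show (X + Y)ᴴ * Bᴴ * (B * (X + Y)) = (X + Y)ᴴ * ((Bᴴ * B) * (X + Y)) by noncomm_ring,
        hBu, Matrix.one_mul]
    have key : ((B * (X * X - Y * Yᴴ)).trace).re = (((X - Y)ᴴ * (B * (X + Y))).trace).re := by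
      have e1 : (X - Y)ᴴ * (B * (X + Y)) = X * B * X + X * B * Y - Yᴴ * B * X - Yᴴ * B * Y := by
        rw [Matrix.conjTranspose_sub, hXh]
        noncomm_ring
      have c1 : (X * B * X).trace = (B * (X * X)).trace := by
        rw [Matrix.trace_mul_cycle, Matrix.trace_mul_comm]
      have c2 : (Yᴴ * B * Y).trace = (B * (Y * Yᴴ)).trace := by
        rw [Matrix.trace_mul_cycle, Matrix.trace_mul_comm]
      have c3 : ((X * B * Y).trace).re = ((Yᴴ * B * X).trace).re := by
        rw [show X * B * Y = (Yᴴ * B * X)ᴴ by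
          rw [Matrix.conjTranspose_mul, Matrix.conjTranspose_mul,
            Matrix.conjTranspose_conjTranspose, hBh, hXh, Matrix.mul_assoc]]
        rw [Matrix.trace_conjTranspose]
        simp
      rw [e1, Matrix.mul_sub, Matrix.trace_sub, Matrix.trace_sub, Matrix.trace_sub,
        Matrix.trace_add, c1, c2]
      simp only [Complex.sub_re, Complex.add_re]
      linarith
    calc ((B * (X * X - Y * Yᴴ)).trace).re
        = (((X - Y)ᴴ * (B * (X + Y))).trace).re := key
      _ ≤ Real.sqrt (((X - Y)ᴴ * (X - Y)).trace).re *
            Real.sqrt (((B * (X + Y))ᴴ * (B * (X + Y))).trace).re := trace_cs _ _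
      _ = Real.sqrt (2 - 2 * g) * Real.sqrt (2 + 2 * g) := by rw [hminus, hQ, hplus]
      _ = Real.sqrt ((2 - 2 * g) * (2 + 2 * g)) := (Real.sqrt_mul (by linarith) _).symm
      _ ≤ Real.sqrt (4 * ε) := by
          apply Real.sqrt_le_sqrt
          nlinarith [mul_self_le_mul_self hcpos.le hgc]
      _ = 2 * Real.sqrt ε := by
          rw [show (4 : ℝ) * ε = 2 ^ 2 * ε by ring, Real.sqrt_mul (by norm_num),
            Real.sqrt_sq (by norm_num)]
end

section
/- For any type P̂ over a finite alphabet 𝒳 with denominator n, the size of the type class satisfies (n+1)^{-|𝒳|} · 2^{nH(P̂)} ≤ |T(P̂)| ≤ 2^{nH(P̂)}, where H(P̂) is the Shannon entropy of P̂. -/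
open Finset

/-- fiber of `Sigma.fst` over `a` is `Fin (c a)` -/
def fiberEquiv {𝒳 : Type*} (c : 𝒳 → ℕ) (a : 𝒳) :
    {s : Σ b, Fin (c b) // s.1 = a} ≃ Fin (c a) where
  toFun s := Fin.cast (congrArg c s.2) s.1.2
  invFun j := ⟨⟨a, j⟩, rfl⟩
  left_inv := by rintro ⟨⟨b, j⟩, rfl⟩; rfl
  right_inv j := rfl

theorem heq_finCast {m m' : ℕ} (h : m = m') (j : Fin m) : HEq (Fin.cast h j) j := by
  subst h; rfl

theorem card_type_class_mul {𝒳 : Type*} [Fintype 𝒳] [DecidableEq 𝒳] (n : ℕ)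
    (c : 𝒳 → ℕ) (hc : ∑ a, c a = n) :
    (univ.filter (fun x : Fin n → 𝒳 => ∀ a, (univ.filter (fun i => x i = a)).card = c a)).card
      * ∏ a, (c a).factorial = n.factorial := by
  classical
  set S := Σ b, Fin (c b) with hS
  have hcardS : Fintype.card S = n := by simp [hS, hc]
  have h1 : Fintype.card (Fin n ≃ S) = n.factorial := by
    rw [Fintype.card_equiv (Fintype.equivOfCardEq (by simp [hcardS]))]
    simp
  set Φ : (Fin n ≃ S) → (Fin n → 𝒳) := fun e i => (e i).1 with hΦ
  have hmem : ∀ e : Fin n ≃ S, ∀ a, (univ.filter (fun i => Φ e i = a)).card = c a := by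
    intro e a
    have e1 : {i : Fin n // (e i).1 = a} ≃ Fin (c a) :=
      (e.subtypeEquiv (fun i => Iff.rfl)).trans (fiberEquiv c a)
    have := Fintype.card_congr e1
    simpa [Fintype.card_subtype, Φ] using this
  have hfiber : ∀ x : Fin n → 𝒳, (∀ a, (univ.filter (fun i => x i = a)).card = c a) →
      Fintype.card {e : Fin n ≃ S // Φ e = x} = ∏ a, (c a).factorial := by
    intro x hx
    have hcards : ∀ a, Fintype.card {i : Fin n // x i = a} = c a := by
      intro a; rw [Fintype.card_subtype]; exact hx a
    have hbij : Function.Bijective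
        (fun g : (∀ a, {i : Fin n // x i = a} ≃ Fin (c a)) =>
          (⟨(Equiv.sigmaFiberEquiv x).symm.trans (Equiv.sigmaCongrRight g), by
            funext i; rfl⟩ : {e : Fin n ≃ S // Φ e = x})) := by
      constructor
      · intro g g' h
        funext a
        ext ⟨i, hi⟩
        subst hi
        have h1 : (⟨x i, g (x i) ⟨i, rfl⟩⟩ : S) = ⟨x i, g' (x i) ⟨i, rfl⟩⟩ :=
          congrArg (fun e : {e : Fin n ≃ S // Φ e = x} => e.1 i) h
        rw [Sigma.mk.inj_iff] at h1
        exact congrArg Fin.val (eq_of_heq h1.2)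
      · rintro ⟨e, he⟩
        have he' : ∀ i, (e i).1 = x i := fun i => congrFun he i
        refine ⟨fun a => (Equiv.subtypeEquivRight (fun i => (by rw [← he' i] :
            x i = a ↔ (e i).1 = a))).trans
          ((e.subtypeEquiv (fun i => Iff.rfl)).trans (fiberEquiv c a)), ?_⟩
        apply Subtype.ext
        refine Equiv.ext fun i => ?_
        refine Sigma.ext ?_ ?_
        · exact (he' i).symm
        · exact heq_finCast (congrArg c (he' i)) ((e i).2)
    have := Fintype.card_of_bijective hbij
    rw [← this, Fintype.card_pi]
    congr 1
    funext a
    rw [Fintype.card_equiv (Fintype.equivOfCardEq (by simp [hcards a])), hcards a]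
  have hsum := Finset.card_eq_sum_card_fiberwise
    (f := Φ) (s := (univ : Finset (Fin n ≃ S)))
    (t := univ.filter (fun x : Fin n → 𝒳 => ∀ a, (univ.filter (fun i => x i = a)).card = c a))
    (fun e _ => by simpa using hmem e)
  rw [Finset.card_univ, h1] at hsum
  rw [hsum]
  have hterm : ∀ x ∈ univ.filter
      (fun x : Fin n → 𝒳 => ∀ a, (univ.filter (fun i => x i = a)).card = c a),
      (univ.filter (fun e => Φ e = x)).card = ∏ a, (c a).factorial := by
    intro x hx
    simp only [mem_filter, mem_univ, true_and] at hx
    rw [← hfiber x hx, Fintype.card_subtype]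
  rw [Finset.sum_congr rfl hterm, Finset.sum_const, smul_eq_mul]

theorem fact_aux1 (c d : ℕ) : (c + d).factorial ≤ c.factorial * (c + d) ^ d := by
  induction d with
  | zero => simp
  | succ d ih =>
    have h1 : (c + (d + 1)).factorial = (c + d + 1) * (c + d).factorial := rfl
    calc (c + (d+1)).factorial = (c + d + 1) * (c + d).factorial := h1
      _ ≤ (c + d + 1) * (c.factorial * (c + d) ^ d) := Nat.mul_le_mul_left _ ih
      _ ≤ (c + d + 1) * (c.factorial * (c + d + 1) ^ d) := by
          exact Nat.mul_le_mul_left _ (Nat.mul_le_mul_left _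
            (Nat.pow_le_pow_left (Nat.le_succ _) d))
      _ = c.factorial * (c + (d+1)) ^ (d+1) := by ring_nf
  
theorem fact_aux2 (k d : ℕ) : k.factorial * k ^ d ≤ (k + d).factorial := by
  induction d with
  | zero => simp
  | succ d ih =>
    calc k.factorial * k ^ (d+1) = (k.factorial * k ^ d) * k := by ring
      _ ≤ (k + d).factorial * k := Nat.mul_le_mul_right _ ih
      _ ≤ (k + d).factorial * (k + d + 1) := Nat.mul_le_mul_left _ (by omega)
      _ = (k + (d+1)).factorial := by
          rw [show k + (d+1) = (k+d)+1 from rfl, Nat.factorial_succ]; ring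

theorem fact_pow_le (k c : ℕ) : k.factorial * k ^ c ≤ c.factorial * k ^ k := by
  rcases le_total c k with h | h
  · obtain ⟨d, rfl⟩ := Nat.exists_eq_add_of_le h
    calc (c + d).factorial * (c + d) ^ c
        ≤ (c.factorial * (c + d) ^ d) * (c + d) ^ c := Nat.mul_le_mul_right _ (fact_aux1 c d)
      _ = c.factorial * (c + d) ^ (c + d) := by rw [mul_assoc, ← pow_add, add_comm d c]
  · obtain ⟨d, rfl⟩ := Nat.exists_eq_add_of_le h
    calc k.factorial * k ^ (k + d) = (k.factorial * k ^ d) * k ^ k := by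
          rw [mul_assoc, ← pow_add, add_comm d k]
      _ ≤ (k + d).factorial * k ^ k := Nat.mul_le_mul_right _ (fact_aux2 k d)

/-- Shannon entropy (base 2) of a finite probability vector. -/
noncomputable def H2 {α : Type*} [Fintype α] (p : α → ℝ) : ℝ :=
  -∑ a, p a * Real.logb 2 (p a)

/-- Size of a type class: for a type `P` with denominator `n`,
`(n+1)^{-|𝒳|} 2^{nH(P)} ≤ |T(P)| ≤ 2^{nH(P)}`. -/
theorem type_class_size {𝒳 : Type*} [Fintype 𝒳] [DecidableEq 𝒳] (n : ℕ) (hn : 0 < n)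
    (P : 𝒳 → ℝ) (hP0 : ∀ a, 0 ≤ P a) (hP1 : ∑ a, P a = 1)
    (htype : ∀ a, ∃ k : ℕ, P a = (k : ℝ) / n) :
    ((n : ℝ) + 1)⁻¹ ^ (Fintype.card 𝒳) * (2 : ℝ) ^ ((n : ℝ) * H2 P)
      ≤ (Nat.card {x : Fin n → 𝒳 //
          ∀ a, ((Finset.univ.filter (fun i => x i = a)).card : ℝ) / n = P a} : ℝ)
    ∧ (Nat.card {x : Fin n → 𝒳 //
          ∀ a, ((Finset.univ.filter (fun i => x i = a)).card : ℝ) / n = P a} : ℝ)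
      ≤ (2 : ℝ) ^ ((n : ℝ) * H2 P) := by
  classical
  have hn' : (n : ℝ) ≠ 0 := Nat.cast_ne_zero.mpr hn.ne'
  choose k hk using htype
  have hkn : ∀ a, (k a : ℝ) = n * P a := by
    intro a; rw [hk a]; field_simp
  have hsumk : ∑ a, k a = n := by
    have : ((∑ a, k a : ℕ) : ℝ) = (n : ℝ) := by
      push_cast
      rw [Finset.sum_congr rfl (fun a _ => hkn a), ← Finset.mul_sum, hP1, mul_one]
    exact_mod_cast this
  have hPpos : ∀ a, k a ≠ 0 → 0 < P a := by
    intro a ha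
    rw [hk a]
    positivity
  -- the type class as a Finset
  set T : Finset (Fin n → 𝒳) :=
    univ.filter (fun x => ∀ a, (univ.filter (fun i => x i = a)).card = k a) with hT
  have hNT : (Nat.card {x : Fin n → 𝒳 //
      ∀ a, ((Finset.univ.filter (fun i => x i = a)).card : ℝ) / n = P a}) = T.card := by
    rw [Nat.card_congr (Equiv.subtypeEquivRight (q := fun x : Fin n → 𝒳 =>
        ∀ a, (univ.filter (fun i => x i = a)).card = k a) (fun x => ?_)),
      Nat.card_eq_fintype_card, Fintype.card_subtype]
    constructor
    · intro h a
      have := h a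
      rw [hk a, div_eq_div_iff hn' hn'] at this
      exact_mod_cast mul_right_cancel₀ hn' this
    · intro h a
      rw [h a, hk a]
  -- Q
  set Q : ℝ := ∏ a, P a ^ (k a) with hQ
  have hQpos : 0 < Q := by
    apply Finset.prod_pos
    intro a _
    rcases Nat.eq_zero_or_pos (k a) with h | h
    · rw [h]; norm_num
    · exact pow_pos (hPpos a h.ne') _
  have hlogQ : Real.logb 2 Q = -((n : ℝ) * H2 P) := by
    rw [hQ, Real.logb_prod _ _ (fun a _ => ?_)]
    · unfold H2
      rw [mul_neg, neg_neg, Finset.mul_sum]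
      refine Finset.sum_congr rfl fun a _ => ?_
      rw [Real.logb_pow, hkn a, mul_assoc]
    · rcases Nat.eq_zero_or_pos (k a) with h | h
      · rw [h]; norm_num
      · exact (pow_pos (hPpos a h.ne') _).ne'
  have h2H : (2 : ℝ) ^ ((n : ℝ) * H2 P) = Q⁻¹ := by
    have h := Real.rpow_logb (by norm_num : (0:ℝ) < 2) (by norm_num) hQpos
    rw [hlogQ] at h
    rw [← h, ← Real.rpow_neg (by norm_num), neg_neg]
  -- the weight function
  set f : (Fin n → 𝒳) → ℝ := fun x => ∏ i, P (x i) with hf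
  have hfnn : ∀ x, 0 ≤ f x := fun x => Finset.prod_nonneg fun i _ => hP0 _
  have hfsum : ∑ x : Fin n → 𝒳, f x = 1 := by
    have h := Finset.prod_univ_sum (fun _ : Fin n => (univ : Finset 𝒳)) (fun _ a => P a)
    rw [Fintype.piFinset_univ] at h
    rw [hf, ← h]
    simp [hP1]
  have hfc : ∀ (x : Fin n → 𝒳) (c : 𝒳 → ℕ),
      (∀ a, (univ.filter (fun i => x i = a)).card = c a) → f x = ∏ a, P a ^ (c a) := by
    intro x c hx
    show (∏ i, P (x i)) = _
    rw [← Finset.prod_fiberwise (univ : Finset (Fin n)) x (fun i => P (x i))]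
    refine Finset.prod_congr rfl fun a _ => ?_
    rw [Finset.prod_congr rfl (fun i hi => ?_), Finset.prod_const, hx a]
    rw [(Finset.mem_filter.mp hi).2]
  -- counts sum to n
  have hcount : ∀ x : Fin n → 𝒳, ∑ a, (univ.filter (fun i => x i = a)).card = n := by
    intro x
    have := Finset.card_eq_sum_card_fiberwise (f := x) (s := univ) (t := univ)
      (fun i _ => mem_univ _)
    rw [Finset.card_univ, Fintype.card_fin] at this
    exact this.symm
  -- sum over T
  have hTQ : ∑ x ∈ T, f x = (T.card : ℝ) * Q := by
    rw [Finset.sum_congr rfl (fun x hx => hfc x k (Finset.mem_filter.mp hx).2),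
      Finset.sum_const, nsmul_eq_mul]
  -- upper bound core
  have hupper : (T.card : ℝ) * Q ≤ 1 := by
    rw [← hTQ, ← hfsum]
    exact Finset.sum_le_sum_of_subset_of_nonneg (Finset.subset_univ T)
      (fun x _ _ => hfnn x)
  -- lower bound core
  set g : (Fin n → 𝒳) → (𝒳 → Fin (n + 1)) := fun x a =>
    ⟨(univ.filter (fun i => x i = a)).card,
      Nat.lt_succ_of_le (le_trans (Finset.card_filter_le _ _) (by simp))⟩ with hg
  have hgroup : ∑ cf : 𝒳 → Fin (n+1), ∑ x ∈ univ.filter (fun x => g x = cf), f x = 1 := by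
    rw [Finset.sum_fiberwise univ g f, hfsum]
  have hinner : ∀ cf : 𝒳 → Fin (n+1),
      ∑ x ∈ univ.filter (fun x => g x = cf), f x ≤ (T.card : ℝ) * Q := by
    intro cf
    set c : 𝒳 → ℕ := fun a => (cf a : ℕ) with hc
    have hfib : univ.filter (fun x : Fin n → 𝒳 => g x = cf)
        = univ.filter (fun x : Fin n → 𝒳 => ∀ a, (univ.filter (fun i => x i = a)).card = c a) := by
      refine Finset.filter_congr fun x _ => ?_
      constructor
      · intro h a
        exact congrArg Fin.val (congrFun h a)
      · intro h
        funext a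
        exact Fin.ext (h a)
    rcases eq_or_ne (∑ a, c a) n with hcn | hcn
    · -- comparison
      have hA := card_type_class_mul n c hcn
      have hB := card_type_class_mul n k hsumk
      set A := (univ.filter (fun x : Fin n → 𝒳 =>
        ∀ a, (univ.filter (fun i => x i = a)).card = c a)).card with hAdef
      -- nat inequality
      have hprod : ∏ a, ((k a).factorial * k a ^ c a) ≤ ∏ a, ((c a).factorial * k a ^ k a) :=
        Finset.prod_le_prod' fun a _ => fact_pow_le (k a) (c a)
      have hnat : A * ∏ a, k a ^ c a ≤ T.card * ∏ a, k a ^ k a := by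
        have hpos : 0 < (∏ a, (c a).factorial) * ∏ a, (k a).factorial :=
          Nat.mul_pos (Finset.prod_pos fun a _ => Nat.factorial_pos _)
            (Finset.prod_pos fun a _ => Nat.factorial_pos _)
        refine Nat.le_of_mul_le_mul_right ?_ hpos
        calc A * (∏ a, k a ^ c a) * ((∏ a, (c a).factorial) * ∏ a, (k a).factorial)
            = (A * ∏ a, (c a).factorial) * (∏ a, ((k a).factorial * k a ^ c a)) := by
              rw [Finset.prod_mul_distrib]; ring
          _ = n.factorial * (∏ a, ((k a).factorial * k a ^ c a)) := by rw [hA]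
          _ ≤ n.factorial * (∏ a, ((c a).factorial * k a ^ k a)) :=
              Nat.mul_le_mul_left _ hprod
          _ = (T.card * ∏ a, (k a).factorial) * (∏ a, ((c a).factorial * k a ^ k a)) := by
              rw [hB]
          _ = T.card * (∏ a, k a ^ k a) * ((∏ a, (c a).factorial) * ∏ a, (k a).factorial) := by
              rw [Finset.prod_mul_distrib]; ring
      -- convert to reals
      have hPc : ∀ (c' : 𝒳 → ℕ), (∑ a, c' a = n) →
          ∏ a, P a ^ (c' a) = (∏ a, (k a : ℝ) ^ (c' a)) / (n : ℝ) ^ n := by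
        intro c' hc'
        rw [eq_div_iff (by positivity)]
        have : ((n : ℝ) ^ n) = ∏ a, (n : ℝ) ^ (c' a) := by
          rw [Finset.prod_pow_eq_pow_sum, hc']
        rw [this, ← Finset.prod_mul_distrib]
        refine Finset.prod_congr rfl fun a _ => ?_
        rw [hk a, div_pow, div_mul_cancel₀]
        positivity
      have hsum_eq : ∑ x ∈ univ.filter (fun x => g x = cf), f x
          = (A : ℝ) * ∏ a, P a ^ (c a) := by
        rw [hfib, Finset.sum_congr rfl (fun x hx => hfc x c (Finset.mem_filter.mp hx).2),
          Finset.sum_const, nsmul_eq_mul]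
      rw [hsum_eq, hQ, hPc c hcn, hPc k hsumk]
      rw [div_eq_mul_inv, div_eq_mul_inv, ← mul_assoc, ← mul_assoc]
      apply mul_le_mul_of_nonneg_right _ (by positivity)
      exact_mod_cast hnat
    · -- empty fiber
      have : univ.filter (fun x : Fin n → 𝒳 => g x = cf) = ∅ := by
        rw [hfib]
        rw [Finset.filter_eq_empty_iff]
        intro x _ hx
        exact hcn (by rw [← Finset.sum_congr rfl fun a _ => hx a, hcount x])
      rw [this, Finset.sum_empty]
      exact mul_nonneg (Nat.cast_nonneg _) hQpos.le
  have hlower : 1 ≤ ((n : ℝ) + 1) ^ (Fintype.card 𝒳) * ((T.card : ℝ) * Q) := by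
    calc (1 : ℝ) = ∑ cf : 𝒳 → Fin (n+1), ∑ x ∈ univ.filter (fun x => g x = cf), f x :=
            hgroup.symm
      _ ≤ ∑ _cf : 𝒳 → Fin (n+1), (T.card : ℝ) * Q := Finset.sum_le_sum fun cf _ => hinner cf
      _ = ((n : ℝ) + 1) ^ (Fintype.card 𝒳) * ((T.card : ℝ) * Q) := by
          rw [Finset.sum_const, nsmul_eq_mul, Finset.card_univ, Fintype.card_fun,
            Fintype.card_fin]
          push_cast
          ring
  rw [hNT, h2H]
  have hMQ : (0:ℝ) < ((n:ℝ) + 1) ^ (Fintype.card 𝒳) * Q := by positivity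
  constructor
  · have heq' : ((n : ℝ) + 1)⁻¹ ^ (Fintype.card 𝒳) * Q⁻¹
        = (((n : ℝ) + 1) ^ (Fintype.card 𝒳) * Q)⁻¹ := by
      rw [mul_inv, inv_pow]
    refine le_of_mul_le_mul_right ?_ hMQ
    rw [heq', inv_mul_cancel₀ hMQ.ne']
    calc (1:ℝ) ≤ ((n : ℝ) + 1) ^ (Fintype.card 𝒳) * ((T.card : ℝ) * Q) := hlower
      _ = (T.card : ℝ) * (((n : ℝ) + 1) ^ (Fintype.card 𝒳) * Q) := by ring
  · refine le_of_mul_le_mul_right ?_ hQpos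
    rw [inv_mul_cancel₀ hQpos.ne']
    exact hupper
end
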